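/- In the weighted Metcalfe game on N = {g, u_1, ..., u_n} with ν(S) = 0 if g ∉ S and ν(S) = ρ(∑_{i : u_i ∈ S} w_i)² if g ∈ S, the founder's Shapley value satisfies φ_g(ν)/ν(N) = 1/3 + (1/6)∑_i f_i², where f_i = w_i / ∑_j w_j. In particular φ_g(ν)/ν(N) ≥ 1/3, with equality approached when the work shares f_i are dispersed. -/

import Mathlib

open Finset Filter Topology

/-- The Shapley value of player `i` in the cooperative game with player set `N`
and value function `ν`. -/
noncomputable def shapley {α : Type*} [DecidableEq α] (N : Finset α) (ν : Finset α → ℝ)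
    (i : α) : ℝ :=
  ∑ S ∈ (N.erase i).powerset,
    (((S.card.factorial : ℝ) * ((N.card - S.card - 1).factorial : ℝ)) / (N.card.factorial : ℝ)) *
      (ν (insert i S) - ν S)

section Aux

lemma aux_sum1 (m : ℕ) : 2 * ∑ u ∈ range m, (u + 1) = m * (m + 1) := by
  induction m with
  | zero => simp
  | succ k ih => rw [Finset.sum_range_succ, Nat.mul_add, ih]; ring

lemma aux_sum2 (m : ℕ) : 3 * ∑ u ∈ range m, (u + 1) * (u + 2) = m * (m + 1) * (m + 2) := by
  induction m with
  | zero => simp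
  | succ k ih => rw [Finset.sum_range_succ, Nat.mul_add, ih]; ring

/-- Reindex the sum over supersets of `B`. -/
lemma aux_subset_sum (n : ℕ) (B : Finset (Fin n)) (g : ℕ → ℝ) :
    ∑ T ∈ (univ : Finset (Fin n)).powerset, (if B ⊆ T then g T.card else 0)
      = ∑ u ∈ range ((n - B.card) + 1), ((n - B.card).choose u : ℝ) * g (u + B.card) := by
  rw [← Finset.sum_filter]
  have h1 : ∑ T ∈ (univ : Finset (Fin n)).powerset with B ⊆ T, g T.card
      = ∑ U ∈ ((univ : Finset (Fin n)) \ B).powerset, g (U.card + B.card) := by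
    refine Finset.sum_nbij' (fun T => T \ B) (fun U => U ∪ B) ?_ ?_ ?_ ?_ ?_
    · intro T hT
      simp only [mem_filter, mem_powerset] at hT ⊢
      exact sdiff_subset_sdiff hT.1 (Finset.Subset.refl _)
    · intro U hU
      simp only [mem_powerset] at hU
      simp only [mem_filter, mem_powerset]
      exact ⟨union_subset (hU.trans (sdiff_subset)) (subset_univ B), subset_union_right⟩
    · intro T hT
      simp only [mem_filter, mem_powerset] at hT
      exact sdiff_union_of_subset hT.2
    · intro U hU
      simp only [mem_powerset] at hU
      have hd : Disjoint U B := disjoint_of_subset_left hU sdiff_disjoint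
      show (U ∪ B) \ B = U
      rw [union_sdiff_right, sdiff_eq_self_of_disjoint hd]
    · intro T hT
      simp only [mem_filter, mem_powerset] at hT
      rw [card_sdiff_add_card_eq_card hT.2]
  rw [h1]
  have h2 : ((univ : Finset (Fin n)) \ B).card = n - B.card := by
    rw [card_sdiff_of_subset (subset_univ B), card_univ, Fintype.card_fin]
  have h3 := Finset.sum_powerset_apply_card (fun m => g (m + B.card))
    (x := (univ : Finset (Fin n)) \ B)
  rw [h3, h2]
  refine Finset.sum_congr rfl fun u _ => ?_
  rw [nsmul_eq_mul]

lemma aux_single (n : ℕ) (hn : 1 ≤ n) (i : Fin n) :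
    ∑ T ∈ (univ : Finset (Fin n)).powerset,
      (if i ∈ T then ((T.card.factorial * (n - T.card).factorial : ℕ) : ℝ)
        / ((n + 1).factorial : ℝ) else 0) = 1 / 2 := by
  simp only [← Finset.singleton_subset_iff (a := i)]
  rw [aux_subset_sum n {i}
    (fun s => ((s.factorial * (n - s).factorial : ℕ) : ℝ) / ((n + 1).factorial : ℝ))]
  obtain ⟨m, rfl⟩ : ∃ m, n = m + 1 := ⟨n - 1, by omega⟩
  rw [card_singleton]
  have hr : m + 1 - 1 = m := by omega
  rw [hr]
  have hterm : ∀ u ∈ range (m + 1),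
      (m.choose u : ℝ) * ((((u + 1).factorial * (m + 1 - (u + 1)).factorial : ℕ) : ℝ)
        / ((m + 1 + 1).factorial : ℝ))
      = ((u : ℝ) + 1) * ((m.factorial : ℝ) / ((m + 1 + 1).factorial : ℝ)) := by
    intro u hu
    rw [mem_range] at hu
    have hu' : u ≤ m := by omega
    have hnat : m.choose u * ((u + 1).factorial * (m + 1 - (u + 1)).factorial)
        = (u + 1) * m.factorial := by
      rw [show m + 1 - (u + 1) = m - u from by omega, Nat.factorial_succ,
        ← Nat.choose_mul_factorial_mul_factorial hu']
      ring
    rw [mul_div_assoc'] at *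
    rw [show (m.choose u : ℝ) * (((u + 1).factorial * (m + 1 - (u + 1)).factorial : ℕ) : ℝ)
      = ((m.choose u * ((u + 1).factorial * (m + 1 - (u + 1)).factorial) : ℕ) : ℝ) from by
        push_cast; ring, hnat]
    push_cast; ring
  rw [Finset.sum_congr rfl hterm, ← Finset.sum_mul]
  have hsum : (∑ u ∈ range (m + 1), ((u : ℝ) + 1)) = (m + 1) * (m + 2) / 2 := by
    have h := aux_sum1 (m + 1)
    have h' : (2 : ℝ) * ∑ u ∈ range (m + 1), ((u : ℝ) + 1) = (m + 1) * (m + 1 + 1) := by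
      exact_mod_cast congrArg (Nat.cast : ℕ → ℝ) h
    linarith
  have hfact : ((m + 1 + 1).factorial : ℝ) = (m + 2) * ((m + 1) * m.factorial) := by
    rw [Nat.factorial_succ, Nat.factorial_succ]; push_cast; ring
  rw [hsum, hfact]
  have h1 : (0 : ℝ) < m.factorial := by exact_mod_cast m.factorial_pos
  field_simp

lemma aux_pair (n : ℕ) (i j : Fin n) (hij : i ≠ j) :
    ∑ T ∈ (univ : Finset (Fin n)).powerset,
      (if i ∈ T ∧ j ∈ T then ((T.card.factorial * (n - T.card).factorial : ℕ) : ℝ)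
        / ((n + 1).factorial : ℝ) else 0) = 1 / 3 := by
  have hcond : ∀ T : Finset (Fin n), (i ∈ T ∧ j ∈ T) ↔ ({i, j} : Finset (Fin n)) ⊆ T := by
    intro T; simp [Finset.insert_subset_iff]
  simp only [hcond]
  rw [aux_subset_sum n {i, j}
    (fun s => ((s.factorial * (n - s).factorial : ℕ) : ℝ) / ((n + 1).factorial : ℝ))]
  have hn2 : 2 ≤ n := by
    rcases i with ⟨iv, hi⟩; rcases j with ⟨jv, hj⟩
    simp only [ne_eq, Fin.mk.injEq] at hij
    omega
  obtain ⟨m, rfl⟩ : ∃ m, n = m + 2 := ⟨n - 2, by omega⟩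
  have hcard : ({i, j} : Finset (Fin (m + 2))).card = 2 := by
    rw [card_insert_of_notMem (by simp [hij]), card_singleton]
  rw [hcard]
  have hr : m + 2 - 2 = m := by omega
  rw [hr]
  have hterm : ∀ u ∈ range (m + 1),
      (m.choose u : ℝ) * ((((u + 2).factorial * (m + 2 - (u + 2)).factorial : ℕ) : ℝ)
        / ((m + 2 + 1).factorial : ℝ))
      = ((u : ℝ) + 1) * ((u : ℝ) + 2) * ((m.factorial : ℝ) / ((m + 2 + 1).factorial : ℝ)) := by
    intro u hu
    rw [mem_range] at hu
    have hu' : u ≤ m := by omega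
    have hnat : m.choose u * ((u + 2).factorial * (m + 2 - (u + 2)).factorial)
        = (u + 1) * (u + 2) * m.factorial := by
      rw [show m + 2 - (u + 2) = m - u from by omega, Nat.factorial_succ, Nat.factorial_succ,
        ← Nat.choose_mul_factorial_mul_factorial hu']
      ring
    rw [mul_div_assoc'] at *
    rw [show (m.choose u : ℝ) * (((u + 2).factorial * (m + 2 - (u + 2)).factorial : ℕ) : ℝ)
      = ((m.choose u * ((u + 2).factorial * (m + 2 - (u + 2)).factorial) : ℕ) : ℝ) from by
        push_cast; ring, hnat]
    push_cast; ring
  rw [Finset.sum_congr rfl hterm, ← Finset.sum_mul]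
  have hsum : (∑ u ∈ range (m + 1), ((u : ℝ) + 1) * ((u : ℝ) + 2))
      = (m + 1) * (m + 2) * (m + 3) / 3 := by
    have h := aux_sum2 (m + 1)
    have h' : (3 : ℝ) * ∑ u ∈ range (m + 1), ((u : ℝ) + 1) * ((u : ℝ) + 2)
        = (m + 1) * (m + 1 + 1) * (m + 1 + 2) := by
      exact_mod_cast congrArg (Nat.cast : ℕ → ℝ) h
    linarith
  have hfact : ((m + 2 + 1).factorial : ℝ)
      = (m + 3) * ((m + 2) * ((m + 1) * m.factorial)) := by
    rw [Nat.factorial_succ, Nat.factorial_succ, Nat.factorial_succ]; push_cast; ring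
  rw [hsum, hfact]
  have h1 : (0 : ℝ) < m.factorial := by exact_mod_cast m.factorial_pos
  field_simp

end Aux

theorem stmt_8 (n : ℕ) (hn : 1 ≤ n) (ρ : ℝ) (hρ : 0 < ρ) (w : Fin n → ℝ)
    (hw : ∀ i, 0 < w i)
    (ν : Finset (Option (Fin n)) → ℝ)
    (hν : ∀ S, ν S = if none ∈ S then
      ρ * (∑ i ∈ Finset.univ.filter (fun i : Fin n => some i ∈ S), w i) ^ 2 else 0) :
    shapley Finset.univ ν none / ν Finset.univ =
      1 / 3 + (1 / 6) * ∑ i, (w i / ∑ j, w j) ^ 2 ∧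
    shapley Finset.univ ν none / ν Finset.univ ≥ 1 / 3 := by
  have hcardN : (univ : Finset (Option (Fin n))).card = n + 1 := by
    simp [card_univ]
  -- Step 1 : reindex the Shapley sum over subsets of the users
  have hs : shapley (univ : Finset (Option (Fin n))) ν none
      = ∑ T ∈ (univ : Finset (Fin n)).powerset,
          (((T.card.factorial * (n - T.card).factorial : ℕ) : ℝ) / ((n + 1).factorial : ℝ))
            * (ρ * (∑ i ∈ T, w i) ^ 2) := by
    rw [shapley, hcardN]
    refine Finset.sum_nbij' (fun S => S.preimage some (Option.some_injective _).injOn)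
      (fun T => T.image some) (fun S _ => mem_powerset.2 (subset_univ _)) ?_ ?_ ?_ ?_
    · intro T hT
      rw [mem_powerset]
      intro a ha
      rw [mem_image] at ha
      obtain ⟨b, _, rfl⟩ := ha
      simp
    · intro S hS
      rw [mem_powerset] at hS
      have hnone : none ∉ S := fun h => by simpa using hS h
      ext a
      cases a <;> simp [mem_preimage, hnone]
    · intro T _
      ext b
      simp [mem_preimage, mem_image]
    · intro S hS
      rw [mem_powerset] at hS
      have hnone : none ∉ S := fun h => by simpa using hS h
      have himg : (S.preimage some (Option.some_injective _).injOn).image some = S := by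
        ext a
        cases a <;> simp [mem_preimage, hnone]
      have hcard : (S.preimage some (Option.some_injective _).injOn).card = S.card := by
        conv_rhs => rw [← himg]
        rw [card_image_of_injective _ (Option.some_injective _)]
      have hfil : (univ.filter (fun i : Fin n => some i ∈ insert none S))
          = S.preimage some (Option.some_injective _).injOn := by
        ext a
        simp [mem_preimage]
      rw [hν, hν, if_pos (mem_insert_self _ _), if_neg hnone, hfil, hcard,
        show n + 1 - S.card - 1 = n - S.card from by omega]
      push_cast
      ring
  -- Step 2 : evaluate the sum
  have hmain : ∑ T ∈ (univ : Finset (Fin n)).powerset,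
        (((T.card.factorial * (n - T.card).factorial : ℕ) : ℝ) / ((n + 1).factorial : ℝ))
          * (ρ * (∑ i ∈ T, w i) ^ 2)
      = ρ * ((∑ j, w j) ^ 2 / 3 + (∑ j, (w j) ^ 2) / 6) := by
    set K : ℕ → ℝ := fun s => ((s.factorial * (n - s).factorial : ℕ) : ℝ) / ((n + 1).factorial : ℝ)
      with hK
    calc ∑ T ∈ (univ : Finset (Fin n)).powerset, K T.card * (ρ * (∑ i ∈ T, w i) ^ 2)
        = ρ * ∑ T ∈ (univ : Finset (Fin n)).powerset, ∑ i, ∑ j,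
            (if i ∈ T ∧ j ∈ T then w i * w j * K T.card else 0) := by
          rw [Finset.mul_sum]
          refine Finset.sum_congr rfl fun T _ => ?_
          have h1 : (∑ i ∈ T, w i) = ∑ i, (if i ∈ T then w i else 0) := by
            rw [Finset.sum_ite_mem, univ_inter]
          rw [h1, sq, Finset.sum_mul_sum]
          simp only [Finset.mul_sum]
          refine Finset.sum_congr rfl fun i _ => ?_
          refine Finset.sum_congr rfl fun j _ => ?_
          by_cases hi : i ∈ T <;> by_cases hj : j ∈ T <;> simp [hi, hj] <;> ring
      _ = ρ * ∑ i, ∑ j, ∑ T ∈ (univ : Finset (Fin n)).powerset,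
            (if i ∈ T ∧ j ∈ T then w i * w j * K T.card else 0) := by
          rw [Finset.sum_comm]
          congr 1
          exact Finset.sum_congr rfl fun i _ => Finset.sum_comm
      _ = ρ * ∑ i, ∑ j, w i * w j * (if i = j then (1 : ℝ) / 2 else 1 / 3) := by
          congr 1
          refine Finset.sum_congr rfl fun i _ => Finset.sum_congr rfl fun j _ => ?_
          have h2 : ∑ T ∈ (univ : Finset (Fin n)).powerset,
              (if i ∈ T ∧ j ∈ T then w i * w j * K T.card else 0)
              = w i * w j * ∑ T ∈ (univ : Finset (Fin n)).powerset,
                  (if i ∈ T ∧ j ∈ T then K T.card else 0) := by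
            rw [Finset.mul_sum]
            refine Finset.sum_congr rfl fun T _ => ?_
            by_cases h : i ∈ T ∧ j ∈ T <;> simp [h]
          rw [h2]
          congr 1
          by_cases hij : i = j
          · subst hij
            simp only [and_self, if_pos rfl]
            exact aux_single n hn i
          · rw [if_neg hij]
            exact aux_pair n i j hij
      _ = ρ * ((∑ j, w j) ^ 2 / 3 + (∑ j, (w j) ^ 2) / 6) := by
          congr 1
          have h3 : ∀ i j : Fin n, w i * w j * (if i = j then (1 : ℝ) / 2 else 1 / 3)
              = w i * w j / 3 + (if j = i then w i * w j / 6 else 0) := by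
            intro i j
            by_cases h : i = j
            · subst h; simp; ring
            · rw [if_neg h, if_neg (Ne.symm h)]; ring
          simp only [h3]
          rw [Finset.sum_congr rfl (fun i _ => Finset.sum_add_distrib)]
          rw [Finset.sum_add_distrib]
          have h4 : ∀ i : Fin n, (∑ j, if j = i then w i * w j / 6 else 0) = w i * w i / 6 := by
            intro i
            rw [Finset.sum_ite_eq' univ i (fun j => w i * w j / 6)]
            simp
          simp only [h4]
          have h5 : ∀ i : Fin n, (∑ j, w i * w j / 3) = w i * (∑ j, w j) / 3 := by
            intro i
            rw [← Finset.sum_div, ← Finset.mul_sum]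
          simp only [h5]
          have hsq : (∑ j, (w j : ℝ) ^ 2) = ∑ j, w j * w j :=
            Finset.sum_congr rfl fun j _ => by ring
          rw [← Finset.sum_div, ← Finset.sum_div, ← Finset.sum_mul, hsq, sq]
  -- Step 3 : final assembly
  have hW : 0 < ∑ j, w j :=
    Finset.sum_pos (fun i _ => hw i) ⟨⟨0, hn⟩, mem_univ _⟩
  have hνU : ν univ = ρ * (∑ j, w j) ^ 2 := by
    rw [hν, if_pos (mem_univ _)]
    have hfil : (univ.filter (fun i : Fin n => some i ∈ (univ : Finset (Option (Fin n)))))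
        = univ := by simp
    rw [hfil]
  have hkey : shapley (univ : Finset (Option (Fin n))) ν none / ν univ
      = 1 / 3 + (1 / 6) * ∑ i, (w i / ∑ j, w j) ^ 2 := by
    rw [hs, hmain, hνU]
    have hQ : ∑ i, (w i / ∑ j, w j) ^ 2 = (∑ i, (w i) ^ 2) / (∑ j, w j) ^ 2 := by
      rw [Finset.sum_div]
      exact Finset.sum_congr rfl fun i _ => div_pow _ _ _
    rw [hQ]
    have h0 : (∑ j, w j) ≠ 0 := ne_of_gt hW
    have hρ' : ρ ≠ 0 := ne_of_gt hρ
    field_simp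
  refine ⟨hkey, ?_⟩
  rw [hkey]
  have hnn : 0 ≤ ∑ i, (w i / ∑ j, w j) ^ 2 := Finset.sum_nonneg fun i _ => sq_nonneg _
  linarith
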